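/- Assume condition (R) for complex numbers a, b, c, d, r₁, r₂, r₃, r₄. Then the trace of the 2×2 matrix A₁₂'·J·A₂₁' equals 2acδ', where δ' = 2(r₁r₂ − r₃r₄)/((r₁−r₂)(r₃−r₄)). -/

import Mathlib

set_option maxHeartbeats 1000000
set_option synthInstance.maxHeartbeats 1000000
set_option linter.unusedVariables false

noncomputable section
open Matrix

/-- The 2×2 matrix J = diag(1, −1). -/
def Jmat : Matrix (Fin 2) (Fin 2) ℂ := !![1, 0; 0, -1]

/-- The 2×2 block A₁₂′ of the parametrized Okubo coefficient matrix. -/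
def A12p (a b c d r1 r2 r3 r4 : ℂ) : Matrix (Fin 2) (Fin 2) ℂ :=
  !![((b-c)*r2-(b+c)*r3)/(r1-r2), ((b+c)*r2-(b-c)*r4)/(r2-r1);
     ((b-c)*r1-(b+c)*r3)/(r2-r1), ((b+c)*r1-(b-c)*r4)/(r1-r2)]

/-- The 2×2 block A₂₁′ of the parametrized Okubo coefficient matrix. -/
def A21p (a b c d r1 r2 r3 r4 : ℂ) : Matrix (Fin 2) (Fin 2) ℂ :=
  !![((a+c)*r1-(a-c)*r4)/(r4-r3), ((a-c)*r2-(a+c)*r4)/(r3-r4);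
     ((a+c)*r1-(a-c)*r3)/(r3-r4), ((a-c)*r2-(a+c)*r3)/(r4-r3)]

/-- The 4×4 parametrized coefficient matrix A₁ = [[aJ, A₁₂′],[A₂₁′, bJ]]. -/
def A1mat (a b c d r1 r2 r3 r4 : ℂ) : Matrix (Fin 4) (Fin 4) ℂ :=
  !![a, 0, ((b-c)*r2-(b+c)*r3)/(r1-r2), ((b+c)*r2-(b-c)*r4)/(r2-r1);
     0, -a, ((b-c)*r1-(b+c)*r3)/(r2-r1), ((b+c)*r1-(b-c)*r4)/(r1-r2);
     ((a+c)*r1-(a-c)*r4)/(r4-r3), ((a-c)*r2-(a+c)*r4)/(r3-r4), b, 0;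
     ((a+c)*r1-(a-c)*r3)/(r3-r4), ((a-c)*r2-(a+c)*r3)/(r4-r3), 0, -b]

/-- The 4×4 accessory-parameter-free matrix A₁* = [[aJ, B₁₂],[B₂₁, bJ]]. -/
def A1star (a b c d : ℂ) : Matrix (Fin 4) (Fin 4) ℂ :=
  !![a, 0, ((a-b+c)^2-d^2)/(4*a), ((a+b+c)^2-d^2)/(4*a);
     0, -a, (d^2-(a+b-c)^2)/(4*a), (d^2-(a-b-c)^2)/(4*a);
     ((a-b-c)^2-d^2)/(4*b), ((a+b+c)^2-d^2)/(4*b), b, 0;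
     (d^2-(a+b-c)^2)/(4*b), (d^2-(a-b+c)^2)/(4*b), 0, -b]

/-- Condition (B): none of the listed combinations is an integer. -/
def condB (a b c d : ℂ) : Prop :=
  ∀ n : ℤ, a ≠ n ∧ b ≠ n ∧ c ≠ n ∧ d ≠ n ∧
    2*a ≠ n ∧ 2*b ≠ n ∧ 2*c ≠ n ∧ 2*d ≠ n ∧
    a+b ≠ n ∧ a-b ≠ n ∧ a+c ≠ n ∧ a-c ≠ n ∧ a+d ≠ n ∧ a-d ≠ n ∧
    b+c ≠ n ∧ b-c ≠ n ∧ b+d ≠ n ∧ b-d ≠ n ∧ c+d ≠ n ∧ c-d ≠ n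

/-- Condition (R): r₁r₂r₃r₄ ≠ 0, r₁ ≠ r₂, r₃ ≠ r₄. -/
def condR (r1 r2 r3 r4 : ℂ) : Prop := r1*r2*r3*r4 ≠ 0 ∧ r1 ≠ r2 ∧ r3 ≠ r4

/-- Condition (D). -/
def condD (a b c d r1 r2 r3 r4 : ℂ) : Prop :=
  ((a+b+c)^2*r1*r3 - (a-b+c)^2*r1*r4 - (a-b-c)^2*r2*r3 + (a+b-c)^2*r2*r4
    - 4*a*b*(r1*r2) - 4*a*b*(r3*r4)) / ((r1-r2)*(r3-r4)) = d^2

/-- ε = b(a+c)r₁ + b(a−c)r₂ − a(b+c)r₃ − a(b−c)r₄. -/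
def epsv (a b c d r1 r2 r3 r4 : ℂ) : ℂ :=
  b*(a+c)*r1 + b*(a-c)*r2 - a*(b+c)*r3 - a*(b-c)*r4

/-- δ = r₁r₂ − r₃r₄. -/
def deltav (a b c d r1 r2 r3 r4 : ℂ) : ℂ := r1*r2 - r3*r4

/-- ε′ = 2ε/((r₁−r₂)(r₃−r₄)). -/
def epsp (a b c d r1 r2 r3 r4 : ℂ) : ℂ :=
  2*(epsv a b c d r1 r2 r3 r4)/((r1-r2)*(r3-r4))

/-- δ′ = 2δ/((r₁−r₂)(r₃−r₄)). -/
def deltp (a b c d r1 r2 r3 r4 : ℂ) : ℂ :=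
  2*(deltav a b c d r1 r2 r3 r4)/((r1-r2)*(r3-r4))

/-- R₁₁. -/
def R11 (a b c d r1 r2 r3 r4 : ℂ) : Matrix (Fin 2) (Fin 2) ℂ :=
  ((a^2-b^2-c^2-d^2)/2) • (1 : Matrix (Fin 2) (Fin 2) ℂ)
    + (epsp a b c d r1 r2 r3 r4) • !![0, r2; r1, 0]
    - (b * deltp a b c d r1 r2 r3 r4) • !![c, a+c; a-c, -c]

/-- S₁₁. -/
def S11 (a b c d r1 r2 r3 r4 : ℂ) : Matrix (Fin 2) (Fin 2) ℂ :=
  b • (A12p a b c d r1 r2 r3 r4 * Jmat * A21p a b c d r1 r2 r3 r4)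
    - (a*b^2) • Jmat
    - (2*a*b*c * deltp a b c d r1 r2 r3 r4) • (1 : Matrix (Fin 2) (Fin 2) ℂ)

/-- R̃₁₁. -/
def Rt11 (a b c d r1 r2 r3 r4 : ℂ) : Matrix (Fin 2) (Fin 2) ℂ :=
  ((a^2-b^2-c^2-d^2)/2) • (1 : Matrix (Fin 2) (Fin 2) ℂ)
    - (epsp a b c d r1 r2 r3 r4) • !![0, r2; r1, 0]
    + (b * deltp a b c d r1 r2 r3 r4) • !![c, a+c; a-c, -c]

/-- S̃₁₁. -/
def St11 (a b c d r1 r2 r3 r4 : ℂ) : Matrix (Fin 2) (Fin 2) ℂ :=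
  (a*b^2) • Jmat
    - b • (A12p a b c d r1 r2 r3 r4 * Jmat * A21p a b c d r1 r2 r3 r4)

/-- trace of A₁₂′·J·A₂₁′ equals 2acδ′. -/
theorem stmt_11 (a b c d r1 r2 r3 r4 : ℂ)
    (hR : condR r1 r2 r3 r4) :
    Matrix.trace (A12p a b c d r1 r2 r3 r4 * Jmat * A21p a b c d r1 r2 r3 r4)
      = 2*a*c * (2*(r1*r2 - r3*r4)/((r1-r2)*(r3-r4))) := by
  obtain ⟨h0, h12, h34⟩ := hR
  have h12' : r1 - r2 ≠ 0 := sub_ne_zero.mpr h12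
  have h34' : r3 - r4 ≠ 0 := sub_ne_zero.mpr h34
  simp [A12p, A21p, Jmat, Matrix.trace, Matrix.mul_apply, Fin.sum_univ_succ]
  have hX : r2 * r3 + (-(r2 * r4) - r3 * r1) + r1 * r4 ≠ 0 := by
    intro h
    apply mul_ne_zero h12' h34'
    linear_combination -h
  field_simp [hX]
  ring
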